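/- arXiv:1309.1361 — 5 statements merged into one kernel-verified Lean document; each statement's English description precedes it below -/
import Mathlib

section
/- Let a, b be integers with b odd. Then the set {d : ℤ | ∃ a₁₁ a₂₁ a₂₂ : ℤ, 12 ∣ (a₁₁·a + 6·a₂₁·b) ∧ 2 ∣ (a₂₂·b) ∧ a₁₁·a₂₂ = d} equals the set of all integer multiples of 12 / gcd(a, 6) (note gcd(a,6) divides 12, so 12/gcd(a,6) is an exact integer quotient). -/
private lemma gcd_six (a : ℤ) :
    Int.gcd a 6 = if (2:ℤ) ∣ a then (if (3:ℤ) ∣ a then 6 else 2)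
      else (if (3:ℤ) ∣ a then 3 else 1) := by
  have h2 : (2:ℤ) ∣ a ↔ 2 ∣ Int.gcd a 6 := by
    constructor
    · intro h
      have := Int.dvd_gcd h (by norm_num : (2:ℤ) ∣ 6)
      exact_mod_cast this
    · intro h
      exact dvd_trans (by exact_mod_cast h) (Int.gcd_dvd_left a 6)
  have h3 : (3:ℤ) ∣ a ↔ 3 ∣ Int.gcd a 6 := by
    constructor
    · intro h
      have := Int.dvd_gcd h (by norm_num : (3:ℤ) ∣ 6)
      exact_mod_cast this
    · intro h
      exact dvd_trans (by exact_mod_cast h) (Int.gcd_dvd_left a 6)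
  have hd6 : Int.gcd a 6 ∣ 6 := Nat.gcd_dvd_right a.natAbs 6
  have hle : Int.gcd a 6 ≤ 6 := Nat.le_of_dvd (by norm_num) hd6
  by_cases h2a : (2:ℤ) ∣ a <;> by_cases h3a : (3:ℤ) ∣ a
  · rw [if_pos h2a, if_pos h3a]
    have g2 : 2 ∣ Int.gcd a 6 := h2.mp h2a
    have g3 : 3 ∣ Int.gcd a 6 := h3.mp h3a
    interval_cases Int.gcd a 6 <;> omega
  · rw [if_pos h2a, if_neg h3a]
    have g2 : 2 ∣ Int.gcd a 6 := h2.mp h2a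
    have g3 : ¬ 3 ∣ Int.gcd a 6 := fun h => h3a (h3.mpr h)
    interval_cases Int.gcd a 6 <;> omega
  · rw [if_neg h2a, if_pos h3a]
    have g2 : ¬ 2 ∣ Int.gcd a 6 := fun h => h2a (h2.mpr h)
    have g3 : 3 ∣ Int.gcd a 6 := h3.mp h3a
    interval_cases Int.gcd a 6 <;> omega
  · rw [if_neg h2a, if_neg h3a]
    have g2 : ¬ 2 ∣ Int.gcd a 6 := fun h => h2a (h2.mpr h)
    have g3 : ¬ 3 ∣ Int.gcd a 6 := fun h => h3a (h3.mpr h)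
    interval_cases Int.gcd a 6 <;> omega

theorem degrees_to_product_b_odd (a b : ℤ) (hb : Odd b) :
    {d : ℤ | ∃ a₁₁ a₂₁ a₂₂ : ℤ,
        (12 : ℤ) ∣ (a₁₁ * a + 6 * a₂₁ * b) ∧ (2 : ℤ) ∣ (a₂₂ * b) ∧ a₁₁ * a₂₂ = d}
      = {d : ℤ | ((12 / (Int.gcd a 6 : ℤ))) ∣ d} := by
  ext d
  simp only [Set.mem_setOf_eq]
  constructor
  · rintro ⟨x, y, z, h1, h2, rfl⟩
    have hbo : ¬ (2:ℤ) ∣ b := by rcases hb with ⟨m, rfl⟩; omega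
    have hz : (2:ℤ) ∣ z := ((Int.prime_two.dvd_mul).mp h2).resolve_right hbo
    have h6yb2 : (2:ℤ) ∣ 6*y*b := ⟨3*y*b, by ring⟩
    have h6yb3 : (3:ℤ) ∣ 6*y*b := ⟨2*y*b, by ring⟩
    have h2x : (2:ℤ) ∣ x * a := by
      have h12 := dvd_trans (show (2:ℤ) ∣ 12 by norm_num) h1
      rw [add_comm] at h12
      exact (dvd_add_right h6yb2).mp h12
    have h3x : (3:ℤ) ∣ x * a := by
      have h12 := dvd_trans (show (3:ℤ) ∣ 12 by norm_num) h1
      rw [add_comm] at h12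
      exact (dvd_add_right h6yb3).mp h12
    rw [gcd_six]
    by_cases h2a : (2:ℤ) ∣ a <;> by_cases h3a : (3:ℤ) ∣ a
    · rw [if_pos h2a, if_pos h3a]
      show (12 / ((6:ℕ):ℤ)) ∣ x * z
      norm_num
      exact Dvd.dvd.mul_left hz x
    · rw [if_pos h2a, if_neg h3a]
      show (12 / ((2:ℕ):ℤ)) ∣ x * z
      have hx3 : (3:ℤ) ∣ x := ((Int.prime_three.dvd_mul).mp h3x).resolve_right h3a
      obtain ⟨u, rfl⟩ := hx3
      obtain ⟨v, rfl⟩ := hz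
      exact ⟨u * v, by push_cast; ring⟩
    · rw [if_neg h2a, if_pos h3a]
      show (12 / ((3:ℕ):ℤ)) ∣ x * z
      have hx2 : (2:ℤ) ∣ x := ((Int.prime_two.dvd_mul).mp h2x).resolve_right h2a
      obtain ⟨u, rfl⟩ := hx2
      obtain ⟨v, rfl⟩ := hz
      exact ⟨u * v, by push_cast; ring⟩
    · rw [if_neg h2a, if_neg h3a]
      show (12 / ((1:ℕ):ℤ)) ∣ x * z
      have hx2 : (2:ℤ) ∣ x := ((Int.prime_two.dvd_mul).mp h2x).resolve_right h2a
      have hx3 : (3:ℤ) ∣ x := ((Int.prime_three.dvd_mul).mp h3x).resolve_right h3a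
      have hx6 : (6:ℤ) ∣ x := by omega
      obtain ⟨u, rfl⟩ := hx6
      obtain ⟨v, rfl⟩ := hz
      exact ⟨u * v, by push_cast; ring⟩
  · rintro ⟨k, rfl⟩
    obtain ⟨m, rfl⟩ := hb
    rw [gcd_six]
    by_cases h2a : (2:ℤ) ∣ a <;> by_cases h3a : (3:ℤ) ∣ a
    · rw [if_pos h2a, if_pos h3a]
      have h6a : (6:ℤ) ∣ a := by omega
      obtain ⟨a', rfl⟩ := h6a
      exact ⟨k, k * a', 2, ⟨k * a' * (m+1), by ring⟩, ⟨2*m+1, by ring⟩, by push_cast; ring_nf⟩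
    · rw [if_pos h2a, if_neg h3a]
      obtain ⟨a', rfl⟩ := h2a
      exact ⟨3*k, k * a', 2, ⟨k * a' * (m+1), by ring⟩, ⟨2*m+1, by ring⟩, by push_cast; ring_nf⟩
    · rw [if_neg h2a, if_pos h3a]
      obtain ⟨a', rfl⟩ := h3a
      exact ⟨2*k, k * a', 2, ⟨k * a' * (m+1), by ring⟩, ⟨2*m+1, by ring⟩, by push_cast; ring_nf⟩
    · rw [if_neg h2a, if_neg h3a]
      exact ⟨6*k, k * a, 2, ⟨k * a * (m+1), by ring⟩, ⟨2*m+1, by ring⟩, by push_cast; ring_nf⟩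
end

section
/- Let a, b be integers with b even. Then the set {d : ℤ | ∃ a₁₁ a₂₁ a₂₂ : ℤ, 12 ∣ (a₁₁·a + 6·a₂₁·b) ∧ 2 ∣ (a₂₂·b) ∧ a₁₁·a₂₂ = d} equals the set of all integer multiples of 12 / gcd(a, 12) (note gcd(a,12) divides 12, so 12/gcd(a,12) is an exact integer quotient). -/
theorem degrees_to_product_b_even (a b : ℤ) (hb : Even b) :
    {d : ℤ | ∃ a₁₁ a₂₁ a₂₂ : ℤ,
        (12 : ℤ) ∣ (a₁₁ * a + 6 * a₂₁ * b) ∧ (2 : ℤ) ∣ (a₂₂ * b) ∧ a₁₁ * a₂₂ = d}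
      = {d : ℤ | ((12 / (Int.gcd a 12 : ℤ))) ∣ d} := by
  obtain ⟨c, hc⟩ := hb
  set g : ℤ := (Int.gcd a 12 : ℤ) with hgdef
  have hga : g ∣ a := Int.gcd_dvd_left a 12
  have hg12 : g ∣ 12 := Int.gcd_dvd_right a 12
  have hgne : g ≠ 0 := by
    have h : Int.gcd a 12 ≠ 0 := by simp [Int.gcd_eq_zero_iff]
    rw [hgdef]
    exact_mod_cast h
  have h12 : (12 / g) * g = 12 := Int.ediv_mul_cancel hg12
  ext d
  simp only [Set.mem_setOf_eq]
  constructor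
  · rintro ⟨a₁₁, a₂₁, a₂₂, h1, _, rfl⟩
    have hb12 : (12 : ℤ) ∣ 6 * a₂₁ * b := ⟨a₂₁ * c, by rw [hc]; ring⟩
    have h2 : (12 : ℤ) ∣ a₁₁ * a := by
      have := dvd_sub h1 hb12
      simpa using this
    -- 12 ∣ a₁₁ * g via Bezout
    have hbez := Int.gcd_eq_gcd_ab a 12
    have h3 : (12 : ℤ) ∣ a₁₁ * g := by
      rw [hgdef, hbez]
      obtain ⟨m, hm⟩ := h2
      exact ⟨m * Int.gcdA a 12 + a₁₁ * Int.gcdB a 12, by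
        push_cast
        rw [mul_add]
        rw [show a₁₁ * (↑a * Int.gcdA a 12) = a₁₁ * a * Int.gcdA a 12 by ring, hm]
        ring⟩
    have h4 : (12 / g) ∣ a₁₁ := by
      rw [← mul_dvd_mul_iff_right hgne, h12]
      exact h3
    exact h4.mul_right _
  · rintro ⟨m, rfl⟩
    refine ⟨12 / g, 0, m, ?_, ?_, rfl⟩
    · obtain ⟨a', ha'⟩ := hga
      refine ⟨a', ?_⟩
      rw [mul_comm, mul_zero, zero_mul, add_zero, ha']
      rw [show g * a' * (12 / g) = (12 / g * g) * a' by ring, h12]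
    · exact ⟨m * c, by rw [hc]; ring⟩
end

section
/- The set {d : ℤ | ∃ a₁₁ a₂₁ a₂₂ : ℤ, 12 ∣ (a₁₁ + 6·a₂₁ − d) ∧ 2 ∣ (a₂₂ − d) ∧ a₁₁·a₂₂ = d} equals the set {d : ℤ | ¬(4 ∣ (d − 2))}, i.e. the set of integers d with d ≢ 2 (mod 4). -/
theorem self_degrees_case1b :
    {d : ℤ | ∃ a₁₁ a₂₁ a₂₂ : ℤ,
        (12 : ℤ) ∣ (a₁₁ + 6 * a₂₁ - d) ∧ (2 : ℤ) ∣ (a₂₂ - d) ∧ a₁₁ * a₂₂ = d}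
      = {d : ℤ | ¬ ((4 : ℤ) ∣ (d - 2))} := by
  ext d
  simp only [Set.mem_setOf_eq]
  constructor
  · rintro ⟨a, c, b, h1, h2, h3⟩ hd
    have h2a : (2 : ℤ) ∣ a := by omega
    have h2b : (2 : ℤ) ∣ b := by omega
    obtain ⟨a', rfl⟩ := h2a
    obtain ⟨b', rfl⟩ := h2b
    have h4 : d = 4 * (a' * b') := by linear_combination -h3
    omega
  · intro hd
    rcases Int.even_or_odd d with he | ho
    · have h4d : (4 : ℤ) ∣ d := by
        obtain ⟨k, hk⟩ := he; omega
      obtain ⟨k, rfl⟩ := h4d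
      have h3 : k % 3 = 0 ∨ k % 3 = 1 ∨ k % 3 = 2 := by omega
      rcases h3 with h | h | h
      · obtain ⟨m, rfl⟩ : (3 : ℤ) ∣ k := by omega
        exact ⟨6 * m, -m, 2, ⟨-m, by ring⟩, ⟨1 - 6 * m, by ring⟩, by ring⟩
      · obtain ⟨m, rfl⟩ : ∃ m, k = 3 * m + 1 := ⟨(k - 1) / 3, by omega⟩
        exact ⟨-2, -2 * m - 1, -(6 * m + 2), ⟨-2 * m - 1, by ring⟩,
          ⟨-9 * m - 3, by ring⟩, by ring⟩
      · obtain ⟨m, rfl⟩ : ∃ m, k = 3 * m + 2 := ⟨(k - 2) / 3, by omega⟩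
        exact ⟨2, -2 * m - 1, 6 * m + 4, ⟨-2 * m - 1, by ring⟩,
          ⟨-3 * m - 2, by ring⟩, by ring⟩
    · obtain ⟨m, rfl⟩ := ho
      exact ⟨2 * m + 1, 0, 1, ⟨0, by ring⟩, ⟨-m, by ring⟩, by ring⟩
end

section
/- Let G and H be additive commutative groups, let ε, x ∈ G with ε of additive order 2, let t₀ ≥ 1 be a natural number such that t₀ • x = ε and the additive order of x equals 2·t₀, and let y ∈ H. Then the set {d : ℤ | (∃ u : ℤ, u • ε = d • x) ∧ d • y = 0} equals the set of all integer multiples of lcm(t₀, addOrderOf y) (cast to ℤ). -/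
theorem degrees_connected_sum_case_b
    {G H : Type*} [AddCommGroup G] [AddCommGroup H]
    (ε x : G) (hε : addOrderOf ε = 2)
    (t₀ : ℕ) (ht₀ : 1 ≤ t₀) (hx : t₀ • x = ε) (hord : addOrderOf x = 2 * t₀)
    (y : H) :
    {d : ℤ | (∃ u : ℤ, u • ε = d • x) ∧ d • y = 0}
      = {d : ℤ | ((Nat.lcm t₀ (addOrderOf y) : ℤ)) ∣ d} := by
  have h2ε : (2 : ℤ) • ε = 0 := by
    rw [← addOrderOf_dvd_iff_zsmul_eq_zero, hε]; norm_num
  ext d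
  simp only [Set.mem_setOf_eq]
  constructor
  · rintro ⟨⟨u, hu⟩, hy⟩
    have h2d : ((2 * t₀ : ℕ) : ℤ) ∣ 2 * d := by
      rw [← hord, addOrderOf_dvd_iff_zsmul_eq_zero, mul_zsmul, ← hu,
        smul_comm, h2ε, smul_zero]
    have ht : (t₀ : ℤ) ∣ d := by
      push_cast at h2d
      exact (mul_dvd_mul_iff_left (by norm_num : (2:ℤ) ≠ 0)).mp h2d
    have hm : ((addOrderOf y : ℕ) : ℤ) ∣ d :=
      addOrderOf_dvd_iff_zsmul_eq_zero.mpr hy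
    have := lcm_dvd ht hm
    simpa [← Int.coe_lcm, Int.lcm] using this
  · intro hd
    have ht : (t₀ : ℤ) ∣ d :=
      dvd_trans (by exact_mod_cast Int.natCast_dvd_natCast.mpr (Nat.dvd_lcm_left _ _)) hd
    have hm : ((addOrderOf y : ℕ) : ℤ) ∣ d :=
      dvd_trans (by exact_mod_cast Int.natCast_dvd_natCast.mpr (Nat.dvd_lcm_right _ _)) hd
    obtain ⟨c, hc⟩ := ht
    refine ⟨⟨c, ?_⟩, addOrderOf_dvd_iff_zsmul_eq_zero.mp hm⟩
    rw [hc, mul_comm, mul_zsmul, natCast_zsmul, hx]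
end

section
/- Define a relation R on ℤ × ℤ × ℤ by: (a, b, c) R (A, B, C) if and only if there exist integers d, a₁₁, a₂₁, a₂₂, m with (d = 1 ∨ d = −1), a₁₁·a₂₂ = d, 2·m = a₁₁·(a₁₁ − 1), 2 ∣ (a₁₁·a − d·A), 2 ∣ (a₁₁·b + a₂₁·c + m·a + a₁₁·a₂₁ − d·B), and 24 ∣ (a₂₂·c − d·C). Then for every triple (a, b, c) ∈ ℤ³ there is exactly one triple (A, B, C) in the 38-element set L = {(A, 0, C) | A ∈ {0,1}, C ∈ {0,2,4,6,8,10,12}} ∪ {(A, B, C) | A ∈ {0,1}, B ∈ {0,1}, C ∈ {1,3,5,7,9,11}} such that (a, b, c) R (A, B, C). -/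
/-- The relation encoding homotopy equivalence of rank-1 Poincaré complexes in 𝒥₅
with attaching-map invariants `(a, b, c)` and `(A, B, C)`. -/
def HtpyEquivJ5 (a b c A B C : ℤ) : Prop :=
  ∃ d a₁₁ a₂₁ a₂₂ m : ℤ, (d = 1 ∨ d = -1) ∧ a₁₁ * a₂₂ = d ∧
    2 * m = a₁₁ * (a₁₁ - 1) ∧
    (2 : ℤ) ∣ (a₁₁ * a - d * A) ∧
    (2 : ℤ) ∣ (a₁₁ * b + a₂₁ * c + m * a + a₁₁ * a₂₁ - d * B) ∧
    (24 : ℤ) ∣ (a₂₂ * c - d * C)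

lemma HtpyEquivJ5.reduce {a b c A B C : ℤ} (h : HtpyEquivJ5 a b c A B C) :
    2 ∣ a - A ∧
    (((24 : ℤ) ∣ c - C ∧ ∃ e t : ℤ, b + e * (c + 1) - B = 2 * t) ∨
     ((24 : ℤ) ∣ c + C ∧ ∃ e t : ℤ, b + a + e * (c + 1) - B = 2 * t)) := by
  obtain ⟨d, a₁₁, a₂₁, a₂₂, m, hd, hprod, hm, h1, h2, h3⟩ := h
  obtain ⟨t, ht⟩ := h2
  rcases hd with rfl | rfl
  · rcases Int.eq_one_or_neg_one_of_mul_eq_one' hprod with ⟨rfl, rfl⟩ | ⟨rfl, rfl⟩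
    · have hm0 : m = 0 := by omega
      subst hm0
      exact ⟨by omega, Or.inl ⟨by omega, a₂₁, t, by linear_combination ht⟩⟩
    · have hm0 : m = 1 := by omega
      subst hm0
      exact ⟨by omega, Or.inr ⟨by omega, -a₂₁, -t + a - a₂₁ - B, by linear_combination -ht⟩⟩
  · have hprod' : a₁₁ * (-a₂₂) = 1 := by linear_combination -hprod
    rcases Int.eq_one_or_neg_one_of_mul_eq_one' hprod' with ⟨rfl, h22⟩ | ⟨rfl, h22⟩
    · have ha22 : a₂₂ = -1 := by omega
      subst ha22
      have hm0 : m = 0 := by omega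
      subst hm0
      exact ⟨by omega, Or.inl ⟨by omega, a₂₁, t - B, by linear_combination ht⟩⟩
    · have ha22 : a₂₂ = 1 := by omega
      subst ha22
      have hm0 : m = 1 := by omega
      subst hm0
      exact ⟨by omega, Or.inr ⟨by omega, -a₂₁, -t + a - a₂₁, by linear_combination -ht⟩⟩

theorem thirtyeight_homotopy_types_J5 (a b c : ℤ) :
    ∃! p : ℤ × ℤ × ℤ,
      p ∈ ({q : ℤ × ℤ × ℤ |
              (q.1 ∈ ({0, 1} : Set ℤ) ∧ q.2.1 = 0 ∧
                q.2.2 ∈ ({0, 2, 4, 6, 8, 10, 12} : Set ℤ)) ∨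
              (q.1 ∈ ({0, 1} : Set ℤ) ∧ q.2.1 ∈ ({0, 1} : Set ℤ) ∧
                q.2.2 ∈ ({1, 3, 5, 7, 9, 11} : Set ℤ))} : Set (ℤ × ℤ × ℤ)) ∧
      HtpyEquivJ5 a b c p.1 p.2.1 p.2.2 := by
  rcases Int.even_or_odd c with ⟨k, hk⟩ | ⟨k, hk⟩ <;> subst hk
  · -- c even
    by_cases h24 : (k + k) % 24 ≤ 12
    · refine ⟨(a % 2, 0, (k + k) % 24), ⟨?_, ?_⟩, ?_⟩
      · simp only [Set.mem_setOf_eq, Set.mem_insert_iff, Set.mem_singleton_iff]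
        first
          | exact Or.inl ⟨by omega, trivial, by omega⟩
          | exact Or.inr ⟨by omega, by omega, by omega⟩
      · exact show HtpyEquivJ5 a b (k + k) (a % 2) 0 ((k + k) % 24) from
          ⟨1, 1, b, 1, 0, Or.inl rfl, by ring, by ring, by omega,
            ⟨b + b * k, by ring⟩, by omega⟩
      · rintro ⟨A, B, C⟩ ⟨hmem, hrel⟩
        simp only [Set.mem_setOf_eq, Set.mem_insert_iff, Set.mem_singleton_iff] at hmem
        have hR : HtpyEquivJ5 a b (k + k) A B C := hrel
        obtain ⟨f1, f2⟩ := hR.reduce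
        simp only [Prod.mk.injEq]
        rcases f2 with ⟨f3, -⟩ | ⟨f3, -⟩ <;> refine ⟨by omega, by omega, by omega⟩
    · refine ⟨(a % 2, 0, 24 - (k + k) % 24), ⟨?_, ?_⟩, ?_⟩
      · simp only [Set.mem_setOf_eq, Set.mem_insert_iff, Set.mem_singleton_iff]
        first
          | exact Or.inl ⟨by omega, trivial, by omega⟩
          | exact Or.inr ⟨by omega, by omega, by omega⟩
      · exact show HtpyEquivJ5 a b (k + k) (a % 2) 0 (24 - (k + k) % 24) from
          ⟨1, -1, b + a, -1, 1, Or.inl rfl, by ring, by ring, by omega,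
            ⟨(b + a) * k - b, by ring⟩, by omega⟩
      · rintro ⟨A, B, C⟩ ⟨hmem, hrel⟩
        simp only [Set.mem_setOf_eq, Set.mem_insert_iff, Set.mem_singleton_iff] at hmem
        have hR : HtpyEquivJ5 a b (k + k) A B C := hrel
        obtain ⟨f1, f2⟩ := hR.reduce
        simp only [Prod.mk.injEq]
        rcases f2 with ⟨f3, -⟩ | ⟨f3, -⟩ <;> refine ⟨by omega, by omega, by omega⟩
  · -- c odd
    by_cases h24 : (2 * k + 1) % 24 ≤ 12
    · refine ⟨(a % 2, b % 2, (2 * k + 1) % 24), ⟨?_, ?_⟩, ?_⟩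
      · simp only [Set.mem_setOf_eq, Set.mem_insert_iff, Set.mem_singleton_iff]
        first
          | exact Or.inl ⟨by omega, trivial, by omega⟩
          | exact Or.inr ⟨by omega, by omega, by omega⟩
      · exact show HtpyEquivJ5 a b (2 * k + 1) (a % 2) (b % 2) ((2 * k + 1) % 24) from
          ⟨1, 1, 0, 1, 0, Or.inl rfl, by ring, by ring, by omega, by omega, by omega⟩
      · rintro ⟨A, B, C⟩ ⟨hmem, hrel⟩
        simp only [Set.mem_setOf_eq, Set.mem_insert_iff, Set.mem_singleton_iff] at hmem
        have hR : HtpyEquivJ5 a b (2 * k + 1) A B C := hrel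
        obtain ⟨f1, f2⟩ := hR.reduce
        simp only [Prod.mk.injEq]
        rcases f2 with ⟨f3, e, t, het⟩ | ⟨f3, e, t, het⟩
        · have hb : 2 ∣ b - B := ⟨t - e * (k + 1), by linear_combination het⟩
          refine ⟨by omega, by omega, by omega⟩
        · exact absurd f3 (by omega)
    · refine ⟨(a % 2, (b + a) % 2, 24 - (2 * k + 1) % 24), ⟨?_, ?_⟩, ?_⟩
      · simp only [Set.mem_setOf_eq, Set.mem_insert_iff, Set.mem_singleton_iff]
        first
          | exact Or.inl ⟨by omega, trivial, by omega⟩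
          | exact Or.inr ⟨by omega, by omega, by omega⟩
      · exact show HtpyEquivJ5 a b (2 * k + 1) (a % 2) ((b + a) % 2) (24 - (2 * k + 1) % 24) from
          ⟨1, -1, 0, -1, 1, Or.inl rfl, by ring, by ring, by omega, by omega, by omega⟩
      · rintro ⟨A, B, C⟩ ⟨hmem, hrel⟩
        simp only [Set.mem_setOf_eq, Set.mem_insert_iff, Set.mem_singleton_iff] at hmem
        have hR : HtpyEquivJ5 a b (2 * k + 1) A B C := hrel
        obtain ⟨f1, f2⟩ := hR.reduce
        simp only [Prod.mk.injEq]
        rcases f2 with ⟨f3, e, t, het⟩ | ⟨f3, e, t, het⟩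
        · exact absurd f3 (by omega)
        · have hb : 2 ∣ b + a - B := ⟨t - e * (k + 1), by linear_combination het⟩
          refine ⟨by omega, by omega, by omega⟩
end
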